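/- arXiv:1910.00206 — 2 statements merged into one kernel-verified Lean document; each statement's English description precedes it below -/
import Mathlib

section
/- Let v_1, …, v_d be LDP fan data. Then, after a cyclic relabeling of the indices, there exists an integer n with 0 ≤ n ≤ d such that det(v_i, v_{i+1}) = 1 for all 1 ≤ i ≤ n and det(v_i, v_{i+1}) ≥ 2 for all n+1 ≤ i ≤ d. In other words, the singular cones of any toric log del Pezzo surface occur consecutively in the cyclic order. -/
/-- The determinant `det(u, w) = u₁w₂ − u₂w₁` of two integer vectors. -/
def detZ (u w : ℤ × ℤ) : ℤ := u.1 * w.2 - u.2 * w.1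

/-- The real vector associated to an integer vector. -/
noncomputable def toR2 (u : ℤ × ℤ) : ℝ × ℝ := ((u.1 : ℝ), (u.2 : ℝ))

/-- The cone `ℝ_{≥0} u + ℝ_{≥0} w` spanned by two integer vectors. -/
def coneOf (u w : ℤ × ℤ) : Set (ℝ × ℝ) :=
  {x | ∃ a b : ℝ, 0 ≤ a ∧ 0 ≤ b ∧ x = a • toR2 u + b • toR2 w}

/-- Complete fan data of length `d`: a cyclic sequence of primitive integer vectors with
`det(v_i, v_{i+1}) ≥ 1` whose successive cones cover `ℝ²` and have pairwise disjoint
interiors. -/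
def IsCompleteFanData (d : ℕ) (v : ZMod d → ℤ × ℤ) : Prop :=
  3 ≤ d ∧
  (∀ i, Int.gcd (v i).1 (v i).2 = 1) ∧
  (∀ i, 1 ≤ detZ (v i) (v (i + 1))) ∧
  (⋃ i, coneOf (v i) (v (i + 1))) = Set.univ ∧
  ∀ i j, i ≠ j →
    interior (coneOf (v i) (v (i + 1))) ∩ interior (coneOf (v j) (v (j + 1))) = ∅

/-- `f(i) = det(v_{i−1}, v_i) + det(v_i, v_{i+1}) + det(v_{i+1}, v_{i−1})`. -/
def fanF (d : ℕ) (v : ZMod d → ℤ × ℤ) (i : ZMod d) : ℤ :=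
  detZ (v (i - 1)) (v i) + detZ (v i) (v (i + 1)) + detZ (v (i + 1)) (v (i - 1))

/-- LDP fan data: complete fan data with `f(i) ≥ 1` for all `i`. -/
def IsLDPFanData (d : ℕ) (v : ZMod d → ℤ × ℤ) : Prop :=
  IsCompleteFanData d v ∧ ∀ i, 1 ≤ fanF d v i

/-- The number of singular cones, i.e. indices `i` with `det(v_i, v_{i+1}) ≥ 2`. -/
noncomputable def numSingular (d : ℕ) (v : ZMod d → ℤ × ℤ) : ℕ :=
  {i : ZMod d | 2 ≤ detZ (v i) (v (i + 1))}.ncard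

/-- Equivalence of fan data: some `GL(2, ℤ)` matrix maps the vector set of one
bijectively onto the vector set of the other. -/
def FanEquiv {d₁ d₂ : ℕ} (v : ZMod d₁ → ℤ × ℤ) (w : ZMod d₂ → ℤ × ℤ) : Prop :=
  ∃ M : Matrix (Fin 2) (Fin 2) ℤ, IsUnit M.det ∧
    (fun u : ℤ × ℤ => (M 0 0 * u.1 + M 0 1 * u.2, M 1 0 * u.1 + M 1 1 * u.2)) ''
      Set.range v = Set.range w

/-- The cyclic sequence of length `d − 1` obtained by deleting the vector `v_k`:
it lists `v_{k+1}, v_{k+2}, …, v_{k+d−1}`. -/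
def deleteAt {d : ℕ} (v : ZMod d → ℤ × ℤ) (k : ZMod d) : ZMod (d - 1) → ℤ × ℤ :=
  fun i => v (k + 1 + (i.val : ZMod d))

/-- The cyclic sequence of length `d + 1` obtained by inserting `v_k + v_{k+1}`
between `v_k` and `v_{k+1}`. -/
def insertAt {d : ℕ} (v : ZMod d → ℤ × ℤ) (k : ZMod d) : ZMod (d + 1) → ℤ × ℤ :=
  fun i =>
    if i.val ≤ k.val then v ((i.val : ℕ) : ZMod d)
    else if i.val = k.val + 1 then v k + v (k + 1)
    else v ((i.val - 1 : ℕ) : ZMod d)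

set_option maxHeartbeats 1000000

lemma detZ_anti (u w : ℤ × ℤ) : detZ u w = -detZ w u := by simp [detZ]; ring
lemma detZ_neg_right (u w : ℤ × ℤ) : detZ u (-w) = -detZ u w := by simp [detZ]; ring
lemma detZ_neg_left (u w : ℤ × ℤ) : detZ (-u) w = -detZ u w := by simp [detZ]; ring

/-- real det -/
def detR (u x : ℝ × ℝ) : ℝ := u.1 * x.2 - u.2 * x.1

lemma detR_toR2 (u w : ℤ × ℤ) : detR (toR2 u) (toR2 w) = (detZ u w : ℝ) := by
  simp [detR, toR2, detZ]

lemma scc_openCone_sub {u w : ℤ × ℤ} (huw : 1 ≤ detZ u w) :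
    {x : ℝ × ℝ | 0 < detR (toR2 u) x ∧ 0 < detR x (toR2 w)} ⊆ coneOf u w := by
  rintro x ⟨h1, h2⟩
  have hΔ : (0:ℝ) < (detZ u w : ℝ) := by exact_mod_cast huw
  have hΔ' : detR (toR2 u) (toR2 w) = (detZ u w : ℝ) := detR_toR2 u w
  refine ⟨detR x (toR2 w) / (detZ u w : ℝ), detR (toR2 u) x / (detZ u w : ℝ),
    le_of_lt (div_pos h2 hΔ), le_of_lt (div_pos h1 hΔ), ?_⟩
  have e1 : x.1 * (detZ u w : ℝ) = detR x (toR2 w) * (toR2 u).1 + detR (toR2 u) x * (toR2 w).1 := by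
    rw [← hΔ']; simp [detR]; ring
  have e2 : x.2 * (detZ u w : ℝ) = detR x (toR2 w) * (toR2 u).2 + detR (toR2 u) x * (toR2 w).2 := by
    rw [← hΔ']; simp [detR]; ring
  have hne : (detZ u w : ℝ) ≠ 0 := ne_of_gt hΔ
  ext
  · simp only [Prod.fst_add, Prod.smul_fst, smul_eq_mul]
    field_simp
    linarith [e1]
  · simp only [Prod.snd_add, Prod.smul_snd, smul_eq_mul]
    field_simp
    linarith [e2]

lemma scc_open_detR (u : ℝ × ℝ) : IsOpen {x : ℝ × ℝ | 0 < detR u x} := by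
  have : Continuous fun x : ℝ × ℝ => detR u x := by
    unfold detR; fun_prop
  exact isOpen_lt continuous_const this

lemma scc_open_detR' (w : ℝ × ℝ) : IsOpen {x : ℝ × ℝ | 0 < detR x w} := by
  have : Continuous fun x : ℝ × ℝ => detR x w := by
    unfold detR; fun_prop
  exact isOpen_lt continuous_const this

lemma scc_mem_interior {u w : ℤ × ℤ} (huw : 1 ≤ detZ u w) {p : ℝ × ℝ}
    (h1 : 0 < detR (toR2 u) p) (h2 : 0 < detR p (toR2 w)) :
    p ∈ interior (coneOf u w) := by
  have hsub := scc_openCone_sub huw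
  have hopen : IsOpen ({x : ℝ × ℝ | 0 < detR (toR2 u) x} ∩ {x | 0 < detR x (toR2 w)}) :=
    (scc_open_detR _).inter (scc_open_detR' _)
  exact interior_maximal (fun x hx => hsub ⟨hx.1, hx.2⟩) hopen ⟨h1, h2⟩


lemma detR_add_smul_right (u x y : ℝ × ℝ) (δ : ℝ) :
    detR u (x + δ • y) = detR u x + δ * detR u y := by
  simp [detR]; ring

lemma detR_add_smul_left (u x y : ℝ × ℝ) (δ : ℝ) :
    detR (x + δ • y) u = detR x u + δ * detR y u := by
  simp [detR]; ring

lemma detR_toR2' (u w : ℤ × ℤ) : detR (toR2 u) (toR2 w) = (detZ u w : ℝ) := by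
  simp [detR, toR2, detZ]

lemma detZ_self (u : ℤ × ℤ) : detZ u u = 0 := by simp [detZ, mul_comm]

lemma scc_overlap {d : ℕ} (v : ZMod d → ℤ × ℤ)
    (ha : ∀ k, 1 ≤ detZ (v k) (v (k + 1)))
    (hdisj : ∀ i j, i ≠ j →
      interior (coneOf (v i) (v (i + 1))) ∩ interior (coneOf (v j) (v (j + 1))) = ∅)
    {i j : ZMod d} (hij : i ≠ j)
    (h3 : 1 ≤ detZ (v i) (v j) ∨ v i = v j)
    (h4 : 1 ≤ detZ (v j) (v (i + 1))) : False := by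
  set q1 : ℤ := detZ (v i) (v (j + 1)) with hq1def
  set q2 : ℤ := detZ (v (j + 1)) (v (i + 1)) with hq2def
  set S : ℝ := 1 + |(q1 : ℝ)| + |(q2 : ℝ)| with hSdef
  have hS : (0:ℝ) < S := by positivity
  set δ : ℝ := 1 / S with hδdef
  have hδ : 0 < δ := by rw [hδdef]; exact one_div_pos.mpr hS
  have hδS : δ * S = 1 := by rw [hδdef]; field_simp
  have hδq1 : δ * |(q1 : ℝ)| < 1 := by nlinarith [abs_nonneg ((q1:ℝ)), abs_nonneg ((q2:ℝ))]
  have hδq2 : δ * |(q2 : ℝ)| < 1 := by nlinarith [abs_nonneg ((q1:ℝ)), abs_nonneg ((q2:ℝ))]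
  set p : ℝ × ℝ := toR2 (v j) + δ • toR2 (v (j + 1)) with hpdef
  have haj : (1:ℝ) ≤ (detZ (v j) (v (j+1)) : ℝ) := by exact_mod_cast ha j
  have hai : (1:ℝ) ≤ (detZ (v i) (v (i+1)) : ℝ) := by exact_mod_cast ha i
  have Pj1 : 0 < detR (toR2 (v j)) p := by
    rw [hpdef, detR_add_smul_right, detR_toR2', detR_toR2', detZ_self]
    push_cast
    nlinarith
  have Pj2 : 0 < detR p (toR2 (v (j + 1))) := by
    rw [hpdef, detR_add_smul_left, detR_toR2', detR_toR2']
    rw [detZ_self]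
    push_cast
    nlinarith
  have Pi1 : 0 < detR (toR2 (v i)) p := by
    rw [hpdef, detR_add_smul_right, detR_toR2', detR_toR2', ← hq1def]
    rcases h3 with h3 | h3
    · have h3' : (1:ℝ) ≤ (detZ (v i) (v j) : ℝ) := by exact_mod_cast h3
      have := neg_abs_le ((q1:ℝ))
      nlinarith
    · rw [h3]
      have hq1' : (q1 : ℝ) = (detZ (v j) (v (j+1)) : ℝ) := by rw [hq1def, h3]
      rw [detZ_self, hq1']
      push_cast
      nlinarith
  have Pi2 : 0 < detR p (toR2 (v (i + 1))) := by
    rw [hpdef, detR_add_smul_left, detR_toR2', detR_toR2', ← hq2def]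
    have h4' : (1:ℝ) ≤ (detZ (v j) (v (i+1)) : ℝ) := by exact_mod_cast h4
    have := neg_abs_le ((q2:ℝ))
    nlinarith
  have hmem : p ∈ interior (coneOf (v i) (v (i + 1))) ∩ interior (coneOf (v j) (v (j + 1))) :=
    ⟨scc_mem_interior (ha i) Pi1 Pi2, scc_mem_interior (ha j) Pj1 Pj2⟩
  rw [hdisj i j hij] at hmem
  exact hmem


lemma scc_pluck (A B U W : ℤ × ℤ) (h : detZ A B = 1) :
    detZ U W = detZ U B * detZ A W - detZ A U * detZ W B := by
  have : detZ A B * detZ U W = detZ U B * detZ A W - detZ A U * detZ W B := by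
    simp only [detZ]; ring
  rw [h] at this; linarith

lemma scc_pluck_vec (A B C : ℤ × ℤ) (h : detZ A B = 1) :
    C.1 = detZ C B * A.1 + detZ A C * B.1 ∧ C.2 = detZ C B * A.2 + detZ A C * B.2 := by
  have h1 : detZ A B * C.1 = detZ C B * A.1 + detZ A C * B.1 := by simp only [detZ]; ring
  have h2 : detZ A B * C.2 = detZ C B * A.2 + detZ A C * B.2 := by simp only [detZ]; ring
  rw [h] at h1 h2; constructor <;> linarith

/-- if det u w = 0 and both primitive then w = u or w = -u -/
lemma scc_parallel {u w : ℤ × ℤ} (hu : Int.gcd u.1 u.2 = 1) (hw : Int.gcd w.1 w.2 = 1)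
    (h : detZ u w = 0) : w = u ∨ w = -u := by
  have h' : u.1 * w.2 = u.2 * w.1 := by
    simp only [detZ] at h; linarith
  have hcop : IsCoprime u.1 u.2 := Int.isCoprime_iff_gcd_eq_one.mpr hu
  rcases eq_or_ne u.1 0 with h0 | h0
  · -- u = (0, ±1)
    have hu2 : u.2 = 1 ∨ u.2 = -1 := by
      have : Int.gcd u.1 u.2 = u.2.natAbs := by rw [h0]; simp [Int.gcd]
      rw [this] at hu
      rcases Int.natAbs_eq u.2 with he | he <;> omega
    have hw1 : w.1 = 0 := by
      rcases hu2 with h2 | h2 <;> (rw [h0, h2] at h'; simp at h'; omega)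
    have hw2 : w.2 = 1 ∨ w.2 = -1 := by
      have : Int.gcd w.1 w.2 = w.2.natAbs := by rw [hw1]; simp [Int.gcd]
      rw [this] at hw
      rcases Int.natAbs_eq w.2 with he | he <;> omega
    rcases hu2 with h2 | h2 <;> rcases hw2 with h2' | h2' <;>
      [left; right; right; left] <;>
      (simp only [Prod.ext_iff, Prod.fst_neg, Prod.snd_neg]; constructor <;> omega)
  · have hdvd : u.1 ∣ w.1 := by
      have : u.1 ∣ u.2 * w.1 := ⟨w.2, by linarith⟩
      exact IsCoprime.dvd_of_dvd_mul_left hcop this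
    obtain ⟨c, hc⟩ := hdvd
    have hc2 : w.2 = c * u.2 := by
      have : u.1 * w.2 = u.1 * (c * u.2) := by rw [h']; rw [hc]; ring
      exact mul_left_cancel₀ h0 this
    have hgc : Int.gcd w.1 w.2 = c.natAbs * Int.gcd u.1 u.2 := by
      rw [hc, hc2, mul_comm u.1 c, Int.gcd_mul_left]
    rw [hu, hw, mul_one] at hgc
    have : c = 1 ∨ c = -1 := by
      rcases Int.natAbs_eq c with he | he <;> omega
    rcases this with h1 | h1
    · left; ext <;> simp [hc, hc2, h1]
    · right; ext <;> simp [hc, hc2, h1, Prod.fst_neg, Prod.snd_neg]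


lemma scc_GC {d : ℕ} (hd : 3 ≤ d) (v : ZMod d → ℤ × ℤ)
    (hprim : ∀ k, Int.gcd (v k).1 (v k).2 = 1)
    (ha : ∀ k, 1 ≤ detZ (v k) (v (k + 1)))
    (hf : ∀ k : ZMod d,
      1 ≤ detZ (v (k - 1)) (v k) + detZ (v k) (v (k + 1)) + detZ (v (k + 1)) (v (k - 1)))
    (hSA : ∀ i j : ZMod d, j ≠ i → j ≠ i + 1 →
      1 ≤ detZ (v i) (v j) → 1 ≤ detZ (v j) (v (i + 1)) → False)
    (hdist : ∀ i j : ZMod d, i ≠ j → v i ≠ v j)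
    {i k : ZMod d} (hone : detZ (v i) (v (i + 1)) = 1)
    (hk1 : k ≠ i) (hk2 : k ≠ i + 1) :
    detZ (v k) (v (i + 1)) + detZ (v i) (v k) ≤ 0 := by
  haveI : NeZero d := ⟨by omega⟩
  have hcast : ∀ {a b : ℕ}, a < d → b < d → (a : ZMod d) = (b : ZMod d) → a = b := by
    intro a b haa hbb h
    have := congrArg ZMod.val h
    rwa [ZMod.val_cast_of_lt haa, ZMod.val_cast_of_lt hbb] at this
  have hne0 : ∀ {a : ℕ}, 0 < a → a < d → ((a : ZMod d) ≠ 0) := by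
    intro a h1 h2 h
    have : a = 0 := hcast h2 (by omega) (by simpa using h)
    omega
  let W : ℕ → ℤ × ℤ := fun t => v (i + 1 + (t : ZMod d))
  let X : ℕ → ℤ := fun t => detZ (W t) (v (i + 1))
  let Y : ℕ → ℤ := fun t => detZ (v i) (W t)
  have hWdef : ∀ t : ℕ, W t = v (i + 1 + (t : ZMod d)) := fun _ => rfl
  have hXdef : ∀ t : ℕ, X t = detZ (W t) (v (i + 1)) := fun _ => rfl
  have hYdef : ∀ t : ℕ, Y t = detZ (v i) (W t) := fun _ => rfl
  have hW0 : W 0 = v (i + 1) := by rw [hWdef]; norm_num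
  have hcastd1 : ((d - 1 : ℕ) : ZMod d) = -1 := by
    have h1 : ((d - 1 : ℕ) : ZMod d) = ((d : ℕ) : ZMod d) - 1 := by
      push_cast [Nat.cast_sub (by omega : 1 ≤ d)]; ring
    rw [h1, ZMod.natCast_self]; ring
  have hcastd2 : ((d - 2 : ℕ) : ZMod d) = -2 := by
    have h1 : ((d - 2 : ℕ) : ZMod d) = ((d : ℕ) : ZMod d) - 2 := by
      push_cast [Nat.cast_sub (by omega : 2 ≤ d)]; ring
    rw [h1, ZMod.natCast_self]; ring
  have hWd2 : W (d - 2) = v (i - 1) := by rw [hWdef, hcastd2]; ring_nf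
  have hWsucc : ∀ t : ℕ, W (t + 1) = v (i + 1 + (t : ZMod d) + 1) := by
    intro t; rw [hWdef]; push_cast; ring_nf
  have hdet : ∀ t : ℕ, 1 ≤ detZ (W t) (W (t + 1)) := by
    intro t; rw [hWsucc t, hWdef]; exact ha _
  have hXY : ∀ t s : ℕ, detZ (W t) (W s) = X t * Y s - Y t * X s :=
    fun t s => scc_pluck (v i) (v (i + 1)) (W t) (W s) hone
  have hX0 : X 0 = 0 := by rw [hXdef, hW0, detZ_self]
  have hY0 : Y 0 = 1 := by rw [hYdef, hW0]; exact hone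
  have hidxA : ∀ t : ℕ, t + 1 ≤ d - 1 → i + 1 + (t : ZMod d) ≠ i := by
    intro t h2 h
    have h3 : ((t + 1 : ℕ) : ZMod d) = 0 := by push_cast; linear_combination h
    exact hne0 (by omega) (by omega) h3
  have hidxB : ∀ t : ℕ, 1 ≤ t → t ≤ d - 1 → i + 1 + (t : ZMod d) ≠ i + 1 := by
    intro t h1 h2 h
    have h3 : ((t : ℕ) : ZMod d) = 0 := by linear_combination h
    exact hne0 (by omega) (by omega) h3
  have hSA1 : ∀ t : ℕ, 1 ≤ t → t ≤ d - 2 → ¬(1 ≤ X t ∧ 1 ≤ Y t) := by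
    rintro t h1 h2 ⟨hx, hy⟩
    rw [hXdef] at hx
    rw [hYdef] at hy
    exact hSA i (i + 1 + (t : ZMod d)) (hidxA t (by omega)) (hidxB t h1 (by omega)) hy hx
  have hSA2 : ∀ t : ℕ, 1 ≤ t → t + 3 ≤ d → Y t ≤ -1 → Y (t + 1) ≤ 0 := by
    intro t h1 h2 h3
    by_contra hcon
    push_neg at hcon
    refine hSA (i + 1 + (t : ZMod d)) i ?_ ?_ ?_ ?_
    · exact fun h => (hidxA t (by omega)) h.symm
    · intro h
      have h4 : ((t + 2 : ℕ) : ZMod d) = 0 := by push_cast; linear_combination h.symm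
      exact hne0 (by omega) (by omega) h4
    · have h5 : detZ (v (i + 1 + (t : ZMod d))) (v i) = -Y t := by
        rw [hYdef, hWdef]; exact detZ_anti _ _
      omega
    · have h5 : detZ (v i) (v (i + 1 + (t : ZMod d) + 1)) = Y (t + 1) := by
        rw [hYdef, hWsucc]
      omega
  have hSA3 : ∀ t : ℕ, 1 ≤ t → t + 2 ≤ d → 1 ≤ X t → 0 ≤ X (t + 1) := by
    intro t h1 h2 h3
    by_contra hcon
    push_neg at hcon
    refine hSA (i + 1 + (t : ZMod d)) (i + 1) ?_ ?_ ?_ ?_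
    · exact fun h => (hidxB t h1 (by omega)) h.symm
    · intro h
      have h4 : ((t + 1 : ℕ) : ZMod d) = 0 := by push_cast; linear_combination h.symm
      exact hne0 (by omega) (by omega) h4
    · have h5 : detZ (v (i + 1 + (t : ZMod d))) (v (i + 1)) = X t := (hXdef t).symm
      omega
    · have h5 : detZ (v (i + 1)) (v (i + 1 + (t : ZMod d) + 1)) = -X (t + 1) := by
        rw [hXdef, hWsucc]; exact detZ_anti _ _
      omega
  have hXzero : ∀ t : ℕ, 1 ≤ t → t ≤ d - 2 → X t = 0 → Y t = -1 := by
    intro t h1 h2 h3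
    have h4 : detZ (v (i + 1)) (W t) = 0 := by
      have h5 : detZ (v (i + 1)) (W t) = -detZ (W t) (v (i + 1)) := detZ_anti _ _
      rw [h5, ← hXdef t, h3]; ring
    have hpar : W t = v (i + 1) ∨ W t = -v (i + 1) :=
      scc_parallel (hprim (i + 1)) (hprim _) h4
    rcases hpar with hp | hp
    · exact ((hdist _ _ (hidxB t h1 (by omega)) hp).elim)
    · rw [hYdef, hp, detZ_neg_right, hone]
  have hYzero : ∀ t : ℕ, 1 ≤ t → t ≤ d - 2 → Y t = 0 → X t = -1 := by
    intro t h1 h2 h3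
    have hpar : W t = v i ∨ W t = -v i := by
      refine scc_parallel (hprim i) (hprim _) ?_
      rw [← hYdef]; exact h3
    rcases hpar with hp | hp
    · exact ((hdist _ _ (hidxA t (by omega)) hp).elim)
    · rw [hXdef, hp, detZ_neg_left]
      have h5 : detZ (v i) (v (i + 1)) = -detZ (v (i+1)) (v i) := detZ_anti _ _
      omega
  have hW1 : W 1 = v (i + 1 + 1) := by rw [hWdef]; norm_num
  have hphi1 : X 1 + Y 1 ≤ 0 := by
    have h1 := hf (i + 1)
    rw [add_sub_cancel_right, ← hW1] at h1
    have h2 : detZ (v (i + 1)) (W 1) = -X 1 := by rw [hXdef]; exact detZ_anti _ _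
    have h3 : detZ (W 1) (v i) = -Y 1 := by rw [hYdef]; exact detZ_anti _ _
    omega
  have hX1 : X 1 ≤ -1 := by
    have h1 := hdet 0
    rw [hXY 0 1, hX0, hY0] at h1
    have : 1 ≤ 0 * Y 1 - 1 * X 1 → X 1 ≤ -1 := by intro h; nlinarith
    exact this h1
  have hphiEnd : X (d - 2) + Y (d - 2) ≤ 0 := by
    have h1 := hf i
    rw [← hWd2] at h1
    have h2 : detZ (W (d-2)) (v i) = -Y (d - 2) := by rw [hYdef]; exact detZ_anti _ _
    have h3 : detZ (v (i + 1)) (W (d-2)) = -X (d - 2) := by rw [hXdef]; exact detZ_anti _ _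
    omega
  have hYper : ∀ m t : ℕ, 1 ≤ t → t ≤ d - 2 → Y t ≤ 0 → t + m ≤ d - 2 → Y (t + m) ≤ 0 := by
    intro m
    induction m with
    | zero => intro t h1 h2 h3 h4; simpa using h3
    | succ n IH =>
      intro t h1 h2 h3 h4
      have hYn : Y (t + n) ≤ 0 := IH t h1 h2 h3 (by omega)
      have hstep : Y (t + n + 1) ≤ 0 := by
        rcases eq_or_lt_of_le hYn with he | hl
        · have hx := hYzero (t + n) (by omega) (by omega) he
          have h5 := hdet (t + n)
          rw [hXY (t + n) (t + n + 1), hx, he] at h5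
          nlinarith
        · exact hSA2 (t + n) (by omega) (by omega) (by omega)
      have h6 : t + (n + 1) = t + n + 1 := by omega
      rw [h6]; exact hstep
  have hU : ∀ t : ℕ, 1 ≤ t → t ≤ d - 2 → (∀ s, 1 ≤ s → s ≤ t → 1 ≤ Y s) →
      X t ≤ -1 ∧ X t + Y t ≤ 0 := by
    intro t
    induction t with
    | zero => omega
    | succ n IH =>
      intro h1 h2 hy
      rcases Nat.eq_zero_or_pos n with hn | hn
      · subst hn; exact ⟨hX1, hphi1⟩
      · obtain ⟨hXn, hphin⟩ := IH (by omega) (by omega) (fun s a b => hy s a (by omega))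
        have hYn : 1 ≤ Y n := hy n (by omega) (by omega)
        have hYn1 : 1 ≤ Y (n + 1) := hy (n + 1) (by omega) (by omega)
        have hXn1 : X (n + 1) ≤ -1 := by
          have h5 : ¬(1 ≤ X (n+1) ∧ 1 ≤ Y (n+1)) := hSA1 (n+1) (by omega) h2
          have h6 : X (n + 1) ≤ 0 := by omega
          rcases eq_or_lt_of_le h6 with he | hl
          · have := hXzero (n+1) (by omega) h2 he
            omega
          · omega
        have hD := hdet n
        rw [hXY n (n+1)] at hD
        refine ⟨hXn1, ?_⟩
        by_contra hcon
        push_neg at hcon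
        nlinarith [mul_nonneg (by omega : (0:ℤ) ≤ -X (n+1)) (by omega : (0:ℤ) ≤ -X n - Y n),
          mul_nonneg (by omega : (0:ℤ) ≤ -X n) (by omega : (0:ℤ) ≤ X (n+1) + Y (n+1) - 1)]
  have hL : ∀ m t : ℕ, 1 ≤ t → t + m = d - 2 → 1 ≤ X t → X t + Y t ≤ 0 := by
    intro m
    induction m with
    | zero =>
      intro t h1 h2 _
      rw [show t = d - 2 from by omega]
      exact hphiEnd
    | succ n IH =>
      intro t h1 h2 hXt
      have hYt : Y t ≤ 0 := by
        have h5 : ¬(1 ≤ X t ∧ 1 ≤ Y t) := hSA1 t h1 (by omega)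
        omega
      have hX' : 0 ≤ X (t + 1) := hSA3 t h1 (by omega) hXt
      rcases eq_or_lt_of_le hX' with he | hl
      · have hyv := hXzero (t + 1) (by omega) (by omega) he.symm
        have hD := hdet t
        rw [hXY t (t+1), hyv, ← he] at hD
        nlinarith
      · have hphi' := IH (t + 1) (by omega) (by omega) (by omega)
        have hD := hdet t
        rw [hXY t (t+1)] at hD
        by_contra hcon
        push_neg at hcon
        nlinarith [mul_nonneg (by omega : (0:ℤ) ≤ X t) (by omega : (0:ℤ) ≤ -X (t+1) - Y (t+1)),
          mul_nonneg (by omega : (0:ℤ) ≤ X t + Y t - 1) (by omega : (0:ℤ) ≤ X (t+1))]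
  -- main
  have hval : (((k - (i + 1)).val : ℕ) : ZMod d) = k - (i + 1) := by
    rw [ZMod.natCast_val, ZMod.cast_id]
  set t := (k - (i + 1)).val with htdef
  have hkW : v k = W t := by
    rw [hWdef, hval]; ring_nf
  have ht1 : 1 ≤ t := by
    rcases Nat.eq_zero_or_pos t with h5 | h5
    · exfalso
      have h6 : k - (i + 1) = 0 := by
        rw [← hval, h5]; norm_num
      apply hk2
      linear_combination h6
    · exact h5
  have ht2 : t ≤ d - 2 := by
    have hlt : t < d := ZMod.val_lt _
    rcases Nat.lt_or_ge t (d - 1) with h5 | h5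
    · omega
    · exfalso
      have h6 : t = d - 1 := by omega
      apply hk1
      have h7 := hval
      rw [h6, hcastd1] at h7
      linear_combination h7.symm
  rw [hkW]
  have hgoal : detZ (W t) (v (i + 1)) + detZ (v i) (W t) = X t + Y t := by
    rw [hXdef, hYdef]
  rw [hgoal]
  rcases lt_trichotomy (X t) 0 with hx | hx | hx
  · rcases le_or_gt (Y t) 0 with hy | hy
    · omega
    · have hall : ∀ s, 1 ≤ s → s ≤ t → 1 ≤ Y s := by
        intro s hs1 hs2
        by_contra hcon
        push_neg at hcon
        have h5 := hYper (t - s) s hs1 (by omega) (by omega) (by omega)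
        rw [show s + (t - s) = t from by omega] at h5
        omega
      exact (hU t ht1 ht2 hall).2
  · have := hXzero t ht1 ht2 hx
    omega
  · exact hL (d - 2 - t) t ht1 (by omega) (by omega)


lemma scc_pluck_vec1 (A B C : ℤ × ℤ) (h : detZ A B = 1) :
    C.1 = detZ C B * A.1 + detZ A C * B.1 := by
  have h1 : detZ A B * C.1 = detZ C B * A.1 + detZ A C * B.1 := by simp only [detZ]; ring
  rw [h] at h1; linarith
lemma scc_pluck_vec2 (A B C : ℤ × ℤ) (h : detZ A B = 1) :
    C.2 = detZ C B * A.2 + detZ A C * B.2 := by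
  have h1 : detZ A B * C.2 = detZ C B * A.2 + detZ A C * B.2 := by simp only [detZ]; ring
  rw [h] at h1; linarith

lemma scc_unit_coeff {C : ℤ × ℤ} {c a1 a2 : ℤ} (hCp : Int.gcd C.1 C.2 = 1)
    (h1 : C.1 = c * a1) (h2 : C.2 = c * a2) : c = 1 ∨ c = -1 := by
  have hd : c ∣ (Int.gcd C.1 C.2 : ℤ) := Int.dvd_coe_gcd ⟨a1, h1⟩ ⟨a2, h2⟩
  rw [hCp] at hd
  exact Int.isUnit_iff.mp (isUnit_of_dvd_one hd)

lemma scc_mul_nn {a b : ℤ} (h1 : a ≤ 0) (h2 : b ≤ 0) : 0 ≤ a * b := by nlinarith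

lemma scc_core (A B C D E F : ℤ × ℤ)
    (hAB : detZ A B = 1) (hDE : detZ D E = 1)
    (hBC : 2 ≤ detZ B C) (hEF : 2 ≤ detZ E F)
    (hCp : Int.gcd C.1 C.2 = 1) (hFp : Int.gcd F.1 F.2 = 1)
    (hpsiA : detZ A E + detZ D A ≤ 0)
    (hpsiB : detZ B E + detZ D B ≤ 0)
    (hphiC : detZ C B + detZ A C ≤ 0)
    (hphiE : detZ E B + detZ A E ≤ 0)
    (hpsiF : detZ F E + detZ D F ≤ 0)
    (hpsiC : detZ C E + detZ D C ≤ 0 ∨ C = D)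
    (hphiF : detZ F B + detZ A F ≤ 0 ∨ F = A) : False := by
  set p := detZ A E + detZ D A with hp
  set q := detZ B E + detZ D B with hq
  set P := detZ D B + detZ A D with hP
  set Q := detZ E B + detZ A E with hQ
  set x1 := detZ C B with hx1d
  set x2 := detZ A C with hx2d
  set g1 := detZ F E with hg1d
  set g2 := detZ D F with hg2d
  have hx1 : x1 ≤ -2 := by
    have := detZ_anti C B; omega
  have hg1 : g1 ≤ -2 := by
    have := detZ_anti F E; omega
  have idQP : Q - P = p - q := by
    rw [hp, hq, hP, hQ]; simp only [detZ]; ring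
  have idPsiC : detZ C E + detZ D C = x1 * p + x2 * q := by
    have h : detZ A B * (detZ C E + detZ D C)
        = detZ C B * (detZ A E + detZ D A) + detZ A C * (detZ B E + detZ D B) := by
      simp only [detZ]; ring
    rw [hAB, ← hp, ← hq, ← hx1d, ← hx2d] at h; linarith
  have idPsiD : (1 : ℤ) = detZ D B * p + detZ A D * q := by
    have h : detZ A B * (detZ D E + detZ D D)
        = detZ D B * (detZ A E + detZ D A) + detZ A D * (detZ B E + detZ D B) := by
      simp only [detZ]; ring
    rw [hAB, detZ_self, add_zero, hDE, ← hp, ← hq] at h; linarith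
  have idPhiF : detZ F B + detZ A F = g1 * P + g2 * Q := by
    have h : detZ D E * (detZ F B + detZ A F)
        = detZ F E * (detZ D B + detZ A D) + detZ D F * (detZ E B + detZ A E) := by
      simp only [detZ]; ring
    rw [hDE, ← hP, ← hQ, ← hg1d, ← hg2d] at h; linarith
  have hψC : x1 * p + x2 * q ≤ 1 := by
    rcases hpsiC with h | h
    · rw [idPsiC] at h; omega
    · rw [← idPsiC, h, detZ_self, add_zero, hDE]
  have hφF : g1 * P + g2 * Q ≤ 1 := by
    rcases hphiF with h | h
    · rw [idPhiF] at h; omega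
    · rw [← idPhiF, h, detZ_self, hAB]; omega
  rcases lt_trichotomy p q with hpq | hpq | hpq
  · -- p < q : use C
    have h1 : (q - p) * x1 = q * (x1 + x2) - (x1 * p + x2 * q) := by ring
    have h2 : 0 ≤ q * (x1 + x2) := scc_mul_nn hpsiB hphiC
    have h3 : -1 ≤ (q - p) * x1 := by linarith
    nlinarith [mul_nonneg (by linarith : (0:ℤ) ≤ q - p - 1) (by linarith : (0:ℤ) ≤ -x1 - 2)]
  · -- p = q
    rcases eq_or_lt_of_le hpsiA with hp0 | hp1
    · rw [← hpq, hp0] at idPsiD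
      simp at idPsiD
    · have hψC2 : x1 * p + x2 * q = p * (x1 + x2) := by rw [hpq]; ring
      have h0 : 0 ≤ p * (x1 + x2) := scc_mul_nn (by omega) hphiC
      have h1 : p * (x1 + x2) ≤ 1 := by linarith
      rcases eq_or_lt_of_le h0 with he | hl
      · have hs : x1 + x2 = 0 := by
          rcases mul_eq_zero.mp he.symm with h | h
          · omega
          · exact h
        have hc1 : C.1 = x1 * (A.1 - B.1) := by
          have h := scc_pluck_vec1 A B C hAB
          rw [← hx1d, ← hx2d] at h
          rw [h, show x2 = -x1 from by omega]; ring
        have hc2 : C.2 = x1 * (A.2 - B.2) := by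
          have h := scc_pluck_vec2 A B C hAB
          rw [← hx1d, ← hx2d] at h
          rw [h, show x2 = -x1 from by omega]; ring
        rcases scc_unit_coeff hCp hc1 hc2 with h | h <;> omega
      · have hval : p * (x1 + x2) = 1 := by linarith
        have hpu : p = 1 ∨ p = -1 :=
          Int.isUnit_iff.mp (isUnit_of_dvd_one ⟨x1 + x2, hval.symm⟩)
        have hpm : p = -1 := by omega
        have hsm : x1 + x2 = -1 := by rw [hpm] at hval; omega
        have hCD : C = D := by
          rcases hpsiC with h | h
          · exfalso
            rw [idPsiC] at h
            linarith
          · exact h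
        have hPm : P = -1 := by
          rw [hP, ← hCD, ← hx1d, ← hx2d]; omega
        have hQm : Q = -1 := by omega
        have hx2pos : 1 ≤ x2 := by omega
        rcases hphiF with hF | hF
        · have hphiFval : detZ F B + detZ A F = -(g1 + g2) := by
            rw [idPhiF, hPm, hQm]; ring
          have hzero : g1 + g2 = 0 := by omega
          have hf1 : F.1 = g1 * (D.1 - E.1) := by
            have h := scc_pluck_vec1 D E F hDE
            rw [← hg1d, ← hg2d] at h
            rw [h, show g2 = -g1 from by omega]; ring
          have hf2 : F.2 = g1 * (D.2 - E.2) := by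
            have h := scc_pluck_vec2 D E F hDE
            rw [← hg1d, ← hg2d] at h
            rw [h, show g2 = -g1 from by omega]; ring
          rcases scc_unit_coeff hFp hf1 hf2 with h | h <;> omega
        · have he2 : detZ A E ≤ -2 := by
            rw [hF] at hEF
            have := detZ_anti E A
            omega
          have hx2A : detZ A D = x2 := by rw [hx2d, hCD]
          have hDA : detZ D A = -x2 := by
            have := detZ_anti D A
            omega
          have hpval : p = detZ A E + detZ D A := hp
          linarith
  · -- p > q : use F
    have h1 : (Q - P) * g1 = Q * (g1 + g2) - (g1 * P + g2 * Q) := by ring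
    have h2 : 0 ≤ Q * (g1 + g2) := scc_mul_nn hphiE hpsiF
    have h3 : -1 ≤ (Q - P) * g1 := by linarith
    have h4 : 1 ≤ Q - P := by omega
    nlinarith [mul_nonneg (by linarith : (0:ℤ) ≤ Q - P - 1) (by linarith : (0:ℤ) ≤ -g1 - 2)]


lemma scc_noTwo {d : ℕ} (hd : 3 ≤ d) (v : ZMod d → ℤ × ℤ)
    (hprim : ∀ k, Int.gcd (v k).1 (v k).2 = 1)
    (ha : ∀ k, 1 ≤ detZ (v k) (v (k + 1)))
    (hf : ∀ k : ZMod d,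
      1 ≤ detZ (v (k - 1)) (v k) + detZ (v k) (v (k + 1)) + detZ (v (k + 1)) (v (k - 1)))
    (hSA : ∀ i j : ZMod d, j ≠ i → j ≠ i + 1 →
      1 ≤ detZ (v i) (v j) → 1 ≤ detZ (v j) (v (i + 1)) → False)
    (hdist : ∀ i j : ZMod d, i ≠ j → v i ≠ v j)
    {i j : ZMod d} (hij : i ≠ j)
    (hi1 : detZ (v i) (v (i + 1)) = 1) (hi2 : 2 ≤ detZ (v (i + 1)) (v (i + 1 + 1)))
    (hj1 : detZ (v j) (v (j + 1)) = 1) (hj2 : 2 ≤ detZ (v (j + 1)) (v (j + 1 + 1))) :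
    False := by
  haveI : NeZero d := ⟨by omega⟩
  haveI : Fact (1 < d) := ⟨by omega⟩
  have hone : ((1 : ZMod d)) ≠ 0 := by
    intro h
    have := congrArg ZMod.val h
    rw [ZMod.val_one, ZMod.val_zero] at this
    omega
  have htwo : ((1 : ZMod d)) + 1 ≠ 0 := by
    intro h
    have h2 : ((2 : ℕ) : ZMod d) = ((0 : ℕ) : ZMod d) := by push_cast; rw [← h]; ring
    have := congrArg ZMod.val h2
    rw [ZMod.val_cast_of_lt (by omega : 2 < d), ZMod.val_cast_of_lt (by omega : 0 < d)] at this
    omega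
  have hij1 : j ≠ i + 1 := by
    intro h; rw [h] at hj1; omega
  have hij2 : i ≠ j + 1 := by
    intro h; rw [h] at hi1; omega
  have hpsiA := scc_GC hd v hprim ha hf hSA hdist hj1 hij hij2
  have hpsiB := scc_GC hd v hprim ha hf hSA hdist hj1
    (fun h => hij1 h.symm) (fun h => hij (add_right_cancel h))
  have hphiC := scc_GC hd v hprim ha hf hSA hdist hi1
    (i := i) (k := i + 1 + 1)
    (fun h => htwo (by linear_combination h))
    (fun h => hone (by linear_combination h))
  have hphiE := scc_GC hd v hprim ha hf hSA hdist hi1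
    (i := i) (k := j + 1)
    (fun h => hij2 h.symm) (fun h => hij (add_right_cancel h).symm)
  have hpsiF := scc_GC hd v hprim ha hf hSA hdist hj1
    (i := j) (k := j + 1 + 1)
    (fun h => htwo (by linear_combination h))
    (fun h => hone (by linear_combination h))
  have hpsiC : detZ (v (i+1+1)) (v (j+1)) + detZ (v j) (v (i+1+1)) ≤ 0 ∨ v (i+1+1) = v j := by
    by_cases h : i + 1 + 1 = j
    · exact Or.inr (congrArg v h)
    · exact Or.inl (scc_GC hd v hprim ha hf hSA hdist hj1 (i := j) (k := i + 1 + 1)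
        h (fun hh => hij1 (add_right_cancel hh).symm))
  have hphiF : detZ (v (j+1+1)) (v (i+1)) + detZ (v i) (v (j+1+1)) ≤ 0 ∨ v (j+1+1) = v i := by
    by_cases h : j + 1 + 1 = i
    · exact Or.inr (congrArg v h)
    · exact Or.inl (scc_GC hd v hprim ha hf hSA hdist hi1 (i := i) (k := j + 1 + 1)
        h (fun hh => hij2 (add_right_cancel hh).symm))
  exact scc_core (v i) (v (i+1)) (v (i+1+1)) (v j) (v (j+1)) (v (j+1+1))
    hi1 hj1 hi2 hj2 (hprim _) (hprim _) hpsiA hpsiB hphiC hphiE hpsiF hpsiC hphiF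


/-- The singular cones of a toric log del Pezzo surface occur consecutively: after a
cyclic relabeling `i ↦ c + i`, there is `n` with `0 ≤ n ≤ d` such that the first `n`
cones are nonsingular and the remaining `d − n` cones are singular. -/
theorem singular_cones_consecutive (d : ℕ) (v : ZMod d → ℤ × ℤ)
    (h : IsLDPFanData d v) :
    ∃ (c : ZMod d) (n : ℕ), n ≤ d ∧
      (∀ i : ℕ, 1 ≤ i → i ≤ n →
        detZ (v (c + (i : ZMod d))) (v (c + (i : ZMod d) + 1)) = 1) ∧
      (∀ i : ℕ, n + 1 ≤ i → i ≤ d →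
        2 ≤ detZ (v (c + (i : ZMod d))) (v (c + (i : ZMod d) + 1))) := by
  obtain ⟨⟨hd, hprim, ha, hcover, hdisj⟩, hf⟩ := h
  haveI : NeZero d := ⟨by omega⟩
  have hf' : ∀ k : ZMod d,
      1 ≤ detZ (v (k - 1)) (v k) + detZ (v k) (v (k + 1)) + detZ (v (k + 1)) (v (k - 1)) :=
    fun k => hf k
  have hSA : ∀ i j : ZMod d, j ≠ i → j ≠ i + 1 →
      1 ≤ detZ (v i) (v j) → 1 ≤ detZ (v j) (v (i + 1)) → False := by
    intro i j hji hji1 h1 h2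
    exact scc_overlap v ha hdisj (fun hh => hji hh.symm) (Or.inl h1) h2
  have hdist : ∀ i j : ZMod d, i ≠ j → v i ≠ v j := by
    intro i j hij he
    refine scc_overlap v ha hdisj hij (Or.inr he) ?_
    rw [← he]; exact ha i
  have hval : ∀ x : ZMod d, ((x.val : ℕ) : ZMod d) = x := by
    intro x; rw [ZMod.natCast_val, ZMod.cast_id]
  -- case: all nonsingular
  by_cases hall : ∀ k : ZMod d, detZ (v k) (v (k + 1)) = 1
  · exact ⟨0, d, le_refl d, fun i _ _ => hall _, fun i h1 h2 => absurd h1 (by omega)⟩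
  by_cases hnone : ∀ k : ZMod d, 2 ≤ detZ (v k) (v (k + 1))
  · exact ⟨0, 0, by omega, fun i h1 h2 => absurd h1 (by omega), fun i _ _ => hnone _⟩
  push_neg at hall hnone
  obtain ⟨k₀, hk₀⟩ := hall
  have hk₀2 : 2 ≤ detZ (v k₀) (v (k₀ + 1)) := by have := ha k₀; omega
  obtain ⟨l, hl⟩ := hnone
  have hl1 : detZ (v l) (v (l + 1)) = 1 := by have := ha l; omega
  -- exists S→N transition
  have hex : ∃ c : ZMod d, 2 ≤ detZ (v c) (v (c + 1)) ∧ detZ (v (c + 1)) (v (c + 1 + 1)) = 1 := by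
    by_contra hcon
    push_neg at hcon
    have hstep : ∀ c : ZMod d, 2 ≤ detZ (v c) (v (c + 1)) →
        2 ≤ detZ (v (c + 1)) (v (c + 1 + 1)) := by
      intro c hc
      have h1 := hcon c hc
      have h2 := ha (c + 1)
      omega
    have hallS : ∀ m : ℕ, 2 ≤ detZ (v (k₀ + (m : ZMod d))) (v (k₀ + (m : ZMod d) + 1)) := by
      intro m
      induction m with
      | zero => simpa using hk₀2
      | succ nn IH =>
        have h1 := hstep _ IH
        have he : k₀ + ((nn + 1 : ℕ) : ZMod d) = k₀ + (nn : ZMod d) + 1 := by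
          push_cast; ring
        rw [he]
        exact h1
    have h2 := hallS (l - k₀).val
    rw [hval (l - k₀)] at h2
    have h3 : k₀ + (l - k₀) = l := by ring
    rw [h3] at h2
    omega
  obtain ⟨c, hc2, hc1⟩ := hex
  set Pp : ℕ → Prop := fun m => ∀ i' : ℕ, i' < m →
    detZ (v (c + ((i' + 1 : ℕ) : ZMod d))) (v (c + ((i' + 1 : ℕ) : ZMod d) + 1)) = 1 with hPpdef
  have hP0 : Pp 0 := by intro i' h'; exact absurd h' (Nat.not_lt_zero i')
  set n := Nat.findGreatest Pp d with hndef
  have hPn : Pp n := Nat.findGreatest_spec (Nat.zero_le d) hP0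
  have hPgen : ∀ i : ℕ, 1 ≤ i → i ≤ n →
      detZ (v (c + (i : ZMod d))) (v (c + (i : ZMod d) + 1)) = 1 := by
    intro i h1 h2
    have h3 := hPn (i - 1) (by omega)
    rw [show i - 1 + 1 = i from by omega] at h3
    exact h3
  have hP1 : Pp 1 := by
    intro i' h'
    have hi' : i' = 0 := by omega
    subst hi'
    have he : c + ((0 + 1 : ℕ) : ZMod d) = c + 1 := by push_cast; ring
    rw [he]
    exact hc1
  have hn1 : 1 ≤ n := Nat.le_findGreatest (by omega) hP1
  have hnd : n ≤ d := Nat.findGreatest_le d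
  refine ⟨c, n, hnd, hPgen, ?_⟩
  intro i h1 h2
  -- first, the singular step right after n
  have hsing1 : 2 ≤ detZ (v (c + ((n + 1 : ℕ) : ZMod d))) (v (c + ((n + 1 : ℕ) : ZMod d) + 1)) := by
    have hnotP : ¬ Pp (n + 1) := Nat.findGreatest_is_greatest (n := d) (by omega) (by omega)
    have hne : detZ (v (c + ((n + 1 : ℕ) : ZMod d))) (v (c + ((n + 1 : ℕ) : ZMod d) + 1)) ≠ 1 := by
      intro he
      apply hnotP
      intro i' h'
      rcases Nat.eq_or_lt_of_le (by omega : i' + 1 ≤ n + 1) with hh | hh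
      · rw [hh]; exact he
      · exact hPn i' (by omega)
    have := ha (c + ((n + 1 : ℕ) : ZMod d))
    omega
  -- now prove singularity at offset i
  by_contra hcon
  push_neg at hcon
  have hconv : detZ (v (c + (i : ZMod d))) (v (c + (i : ZMod d) + 1)) = 1 := by
    have := ha (c + (i : ZMod d)); omega
  -- i ≥ n+2 (else contradiction with hsing1)
  have hig : n + 2 ≤ i := by
    rcases Nat.eq_or_lt_of_le h1 with hh | hh
    · exfalso; rw [← hh] at hconv; omega
    · omega
  -- find the next singular offset after i
  have hTex : ∃ t : ℕ, 2 ≤ detZ (v (c + ((i + t : ℕ) : ZMod d))) (v (c + ((i + t : ℕ) : ZMod d) + 1)) := by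
    refine ⟨d - i, ?_⟩
    have he : ((i + (d - i) : ℕ) : ZMod d) = 0 := by
      rw [show i + (d - i) = d from by omega]
      exact ZMod.natCast_self d
    rw [he, add_zero]
    exact hc2
  set t0 := Nat.find hTex with ht0def
  have ht0 := Nat.find_spec hTex
  have ht0pos : 1 ≤ t0 := by
    rcases Nat.eq_zero_or_pos t0 with hh | hh
    · exfalso
      have := ht0
      rw [← ht0def, hh] at this
      simp only [Nat.add_zero] at this
      omega
    · exact hh
  have ht0le : t0 ≤ d - i := by
    apply Nat.find_min' hTex
    have he : ((i + (d - i) : ℕ) : ZMod d) = 0 := by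
      rw [show i + (d - i) = d from by omega]
      exact ZMod.natCast_self d
    rw [he, add_zero]
    exact hc2
  have hm2non : detZ (v (c + ((i + t0 - 1 : ℕ) : ZMod d))) (v (c + ((i + t0 - 1 : ℕ) : ZMod d) + 1)) = 1 := by
    rcases Nat.eq_or_lt_of_le ht0pos with hh | hh
    · rw [show i + t0 - 1 = i from by omega]
      exact hconv
    · have hmin := Nat.find_min hTex (m := t0 - 1) (by omega)
      have h5 := ha (c + ((i + (t0 - 1) : ℕ) : ZMod d))
      rw [show i + t0 - 1 = i + (t0 - 1) from by omega]
      omega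
  have hm2sing : 2 ≤ detZ (v (c + ((i + t0 - 1 : ℕ) : ZMod d) + 1)) (v (c + ((i + t0 - 1 : ℕ) : ZMod d) + 1 + 1)) := by
    have he : c + ((i + t0 - 1 : ℕ) : ZMod d) + 1 = c + ((i + t0 : ℕ) : ZMod d) := by
      have : (i + t0 : ℕ) = (i + t0 - 1) + 1 := by omega
      rw [this]; push_cast; ring
    rw [he]
    exact ht0
  have hm1sing : 2 ≤ detZ (v (c + (n : ZMod d) + 1)) (v (c + (n : ZMod d) + 1 + 1)) := by
    have he : c + (n : ZMod d) + 1 = c + ((n + 1 : ℕ) : ZMod d) := by push_cast; ring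
    rw [he]
    exact hsing1
  have hm1non : detZ (v (c + (n : ZMod d))) (v (c + (n : ZMod d) + 1)) = 1 := hPgen n hn1 (le_refl n)
  -- distinctness of the two transitions
  have hneq : c + (n : ZMod d) ≠ c + ((i + t0 - 1 : ℕ) : ZMod d) := by
    intro hh
    have h5 : ((n : ℕ) : ZMod d) = ((i + t0 - 1 : ℕ) : ZMod d) := by
      have := add_left_cancel hh
      exact this
    have h6 := congrArg ZMod.val h5
    rw [ZMod.val_cast_of_lt (by omega : n < d),
        ZMod.val_cast_of_lt (by omega : i + t0 - 1 < d)] at h6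
    omega
  exact scc_noTwo hd v hprim ha hf' hSA hdist hneq hm1non hm1sing hm2non hm2sing
end

section
/- Let p, q, r, s, t be integers with gcd(q, r) = gcd(s, t) = 1, and suppose the cyclic sequence v_1 = (1,0), v_2 = (0,1), v_3 = (−1,p+1), v_4 = (−1,p), v_5 = (q,r), v_6 = (s,t) is LDP fan data (of length 6) with q ≥ 0, rs ≤ qt − 2, and t ≤ −2. Then s ≥ 1, and one has det(v_6, v_1) + det(v_1, v_1+v_2) + det(v_1+v_2, v_6) = 1 − s ≤ 0, det(v_2+v_3, v_3) + det(v_3, v_4) + det(v_4, v_2+v_3) = 0, and det(v_2, v_3) + det(v_3, v_3+v_4) + det(v_3+v_4, v_2) = 0. Consequently, inserting v_1+v_2 between v_1 and v_2, or v_2+v_3 between v_2 and v_3, or v_3+v_4 between v_3 and v_4, always produces fan data of length 7 that is not LDP fan data; that is, the blow-up of X(Δ) at any of its nonsingular torus-fixed points is not log del Pezzo. -/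
/-- The data `(1,0), (0,1), (−1,p+1), (−1,p), (q,r), (s,t)`. -/
def data6 (p q r s t : ℤ) : ZMod 6 → ℤ × ℤ := fun i =>
  if i = 0 then (1, 0) else if i = 1 then (0, 1) else if i = 2 then (-1, p + 1)
  else if i = 3 then (-1, p) else if i = 4 then (q, r) else (s, t)


lemma mem_interior_coneOf (u w x : ℤ × ℤ) (huw : 0 < detZ u w)
    (h1 : 0 < detZ u x) (h2 : 0 < detZ x w) : toR2 x ∈ interior (coneOf u w) := by
  set S : Set (ℝ × ℝ) :=
    {y | 0 < (u.1 : ℝ) * y.2 - (u.2 : ℝ) * y.1 ∧ 0 < y.1 * (w.2 : ℝ) - y.2 * (w.1 : ℝ)} with hS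
  have hopen : IsOpen S := by
    apply IsOpen.inter
    · exact isOpen_lt continuous_const
        ((continuous_const.mul continuous_snd).sub (continuous_const.mul continuous_fst))
    · exact isOpen_lt continuous_const
        ((continuous_fst.mul continuous_const).sub (continuous_snd.mul continuous_const))
  have hsub : S ⊆ coneOf u w := by
    rintro y ⟨hy1, hy2⟩
    have hD : (0 : ℝ) < (u.1 : ℝ) * w.2 - (u.2 : ℝ) * w.1 := by
      have := huw; unfold detZ at this; exact_mod_cast this
    refine ⟨(y.1 * w.2 - y.2 * w.1) / ((u.1 : ℝ) * w.2 - u.2 * w.1),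
      ((u.1 : ℝ) * y.2 - u.2 * y.1) / ((u.1 : ℝ) * w.2 - u.2 * w.1),
      le_of_lt (div_pos hy2 hD), le_of_lt (div_pos hy1 hD), ?_⟩
    have hD' : ((u.1 : ℝ) * w.2 - u.2 * w.1) ≠ 0 := ne_of_gt hD
    simp only [toR2, Prod.ext_iff, Prod.smul_mk, smul_eq_mul, Prod.mk_add_mk]
    constructor <;> (rw [div_mul_eq_mul_div, div_mul_eq_mul_div, ← add_div, eq_div_iff hD']; ring)
  have hxS : toR2 x ∈ S := by
    constructor
    · have := h1; unfold detZ at this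
      simp only [toR2, hS, Set.mem_setOf_eq]; exact_mod_cast this
    · have := h2; unfold detZ at this
      simp only [toR2, hS, Set.mem_setOf_eq]; exact_mod_cast this
  exact interior_maximal hsub hopen hxS

/-- No blow-up of the hexagonal LDP fan data
`(1,0), (0,1), (−1,p+1), (−1,p), (q,r), (s,t)` (with `q ≥ 0`, `rs ≤ qt − 2`, `t ≤ −2`)
at a nonsingular torus-fixed point is log del Pezzo. -/
theorem hexagon_blowups_not_ldp (p q r s t : ℤ)
    (hqr : Int.gcd q r = 1) (hst : Int.gcd s t = 1)
    (h : IsLDPFanData 6 (data6 p q r s t))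
    (hq : 0 ≤ q) (hrs : r * s ≤ q * t - 2) (ht : t ≤ -2) :
    (1 : ℤ) ≤ s ∧
    (detZ (data6 p q r s t 5) (data6 p q r s t 0) +
      detZ (data6 p q r s t 0) (data6 p q r s t 0 + data6 p q r s t 1) +
      detZ (data6 p q r s t 0 + data6 p q r s t 1) (data6 p q r s t 5) = 1 - s ∧
      1 - s ≤ 0) ∧
    (detZ (data6 p q r s t 1 + data6 p q r s t 2) (data6 p q r s t 2) +
      detZ (data6 p q r s t 2) (data6 p q r s t 3) +
      detZ (data6 p q r s t 3) (data6 p q r s t 1 + data6 p q r s t 2) = 0) ∧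
    (detZ (data6 p q r s t 1) (data6 p q r s t 2) +
      detZ (data6 p q r s t 2) (data6 p q r s t 2 + data6 p q r s t 3) +
      detZ (data6 p q r s t 2 + data6 p q r s t 3) (data6 p q r s t 1) = 0) ∧
    ¬ IsLDPFanData 7 (insertAt (data6 p q r s t) 0) ∧
    ¬ IsLDPFanData 7 (insertAt (data6 p q r s t) 1) ∧
    ¬ IsLDPFanData 7 (insertAt (data6 p q r s t) 2) := by
  
  have hs1 : (1 : ℤ) ≤ s := by
    by_contra hs
    push_neg at hs
    obtain ⟨⟨-, -, hdet, -, hdisj⟩, -⟩ := h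
    have hd34 : (1 : ℤ) ≤ -1 * r - p * q := hdet 3
    have hqt : q * t ≤ 0 := mul_nonpos_of_nonneg_of_nonpos hq (by linarith)
    have hrs2 : r * s ≤ -2 := by linarith
    have hsle : s ≤ 0 := by linarith
    have hr : (1 : ℤ) ≤ r := by
      by_contra h'
      push_neg at h'
      nlinarith [mul_nonneg (neg_nonneg.mpr (show r ≤ 0 by linarith))
        (neg_nonneg.mpr hsle)]
    have hq1 : (1 : ℤ) ≤ q := by
      by_contra h'
      push_neg at h'
      have hq0 : q = 0 := by omega
      subst hq0
      nlinarith
    have hmem1 : toR2 (q, r + 1) ∈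
        interior (coneOf (data6 p q r s t 0) (data6 p q r s t (0 + 1))) :=
      mem_interior_coneOf _ _ _ (show (0:ℤ) < 1 * 1 - 0 * 0 by norm_num)
        (show (0:ℤ) < 1 * (r + 1) - 0 * q by linarith)
        (show (0:ℤ) < q * 1 - (r + 1) * 0 by linarith)
    have hmem2 : toR2 (q, r + 1) ∈
        interior (coneOf (data6 p q r s t 4) (data6 p q r s t (4 + 1))) :=
      mem_interior_coneOf _ _ _ (show (0:ℤ) < q * t - r * s by linarith)
        (show (0:ℤ) < q * (r + 1) - r * q by nlinarith)
        (show (0:ℤ) < q * t - (r + 1) * s by linarith)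
    have he := hdisj 0 4 (by decide)
    rw [Set.eq_empty_iff_forall_notMem] at he
    exact he _ ⟨hmem1, hmem2⟩
  refine ⟨hs1, ⟨?_, by linarith⟩, ?_, ?_, ?_, ?_, ?_⟩
  · show detZ (s, t) (1, 0) + detZ (1, 0) ((1, 0) + (0, 1)) +
      detZ ((1, 0) + (0, 1)) (s, t) = 1 - s
    simp [detZ]; ring
  · show detZ ((0, 1) + (-1, p + 1)) (-1, p + 1) + detZ (-1, p + 1) (-1, p) +
      detZ (-1, p) ((0, 1) + (-1, p + 1)) = 0
    simp [detZ]; ring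
  · show detZ (0, 1) (-1, p + 1) + detZ (-1, p + 1) ((-1, p + 1) + (-1, p)) +
      detZ ((-1, p + 1) + (-1, p)) (0, 1) = 0
    simp [detZ]; ring
  · rintro ⟨-, hf7⟩
    have h0 := hf7 0
    rw [show fanF 7 (insertAt (data6 p q r s t) 0) 0 = 1 - s from by
      show detZ (s, t) (1, 0) + detZ (1, 0) ((1, 0) + (0, 1)) +
        detZ ((1, 0) + (0, 1)) (s, t) = 1 - s
      simp [detZ]; ring] at h0
    linarith
  · rintro ⟨-, hf7⟩
    have h0 := hf7 3
    rw [show fanF 7 (insertAt (data6 p q r s t) 1) 3 = 0 from by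
      show detZ ((0, 1) + (-1, p + 1)) (-1, p + 1) + detZ (-1, p + 1) (-1, p) +
        detZ (-1, p) ((0, 1) + (-1, p + 1)) = 0
      simp [detZ]; ring] at h0
    linarith
  · rintro ⟨-, hf7⟩
    have h0 := hf7 2
    rw [show fanF 7 (insertAt (data6 p q r s t) 2) 2 = 0 from by
      show detZ (0, 1) (-1, p + 1) + detZ (-1, p + 1) ((-1, p + 1) + (-1, p)) +
        detZ ((-1, p + 1) + (-1, p)) (0, 1) = 0
      simp [detZ]; ring] at h0
    linarith
end
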